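/- If n ≥ 6, then the edge general position number of the cycle C_n equals 4, i.e., gp_e(C_n) = 4. -/

import Mathlib

open SimpleGraph

/-- A walk is a geodesic if its length equals the distance between its endpoints. -/
def IsGeodesic {V : Type*} (G : SimpleGraph V) {u v : V} (p : G.Walk u v) : Prop :=
  p.length = G.dist u v

/-- A set `S` of edges of `G` is an edge general position set if no geodesic of `G`
contains three (distinct) edges of `S`. -/
def IsEdgeGPSet {V : Type*} (G : SimpleGraph V) (S : Set (Sym2 V)) : Prop :=
  S ⊆ G.edgeSet ∧
  ∀ ⦃u v : V⦄ (p : G.Walk u v), IsGeodesic G p →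
    ∀ e₁ ∈ S, ∀ e₂ ∈ S, ∀ e₃ ∈ S,
      e₁ ∈ p.edges → e₂ ∈ p.edges → e₃ ∈ p.edges →
        e₁ = e₂ ∨ e₁ = e₃ ∨ e₂ = e₃

open Fin.CommRing

variable {m : ℕ}

private lemma twoNeZero : (2 : Fin (m+6)) ≠ 0 := by
  intro h
  rw [show ((2:Fin (m+6))) = ((2:ℕ):Fin (m+6)) by push_cast; ring] at h
  have := congrArg Fin.val h
  simp [Fin.val_natCast] at this
  rw [Nat.mod_eq_of_lt (by omega)] at this; omega

private lemma succ_succ_ne (u : Fin (m+6)) : u + 1 + 1 ≠ u := by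
  intro h
  apply twoNeZero (m := m)
  linear_combination h

private lemma adj_succ (u : Fin (m+6)) : (cycleGraph (m+6)).Adj u (u+1) := by
  have h : (cycleGraph (m+4+2)).Adj u (u+1) := cycleGraph_adj.mpr (Or.inr (by ring))
  exact h

private lemma adj_cases {u v : Fin (m+6)} (h : (cycleGraph (m+6)).Adj u v) :
    v = u + 1 ∨ u = v + 1 := by
  have h' : (cycleGraph (m+4+2)).Adj u v := h
  rcases cycleGraph_adj.mp h' with h1 | h1
  · right; linear_combination h1
  · left; linear_combination h1

private def disp : ∀ {u v : Fin (m+6)}, (cycleGraph (m+6)).Walk u v → ℤ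
  | _, _, .nil => 0
  | u, _, .cons (v := b) _ p => (if b = u + 1 then (1:ℤ) else -1) + disp p

@[simp] private lemma disp_nil {u : Fin (m+6)} : disp (.nil : (cycleGraph (m+6)).Walk u u) = 0 := rfl

private lemma disp_cons {u b v : Fin (m+6)} (h : (cycleGraph (m+6)).Adj u b)
    (p : (cycleGraph (m+6)).Walk b v) :
    disp (.cons h p) = (if b = u + 1 then (1:ℤ) else -1) + disp p := rfl

private lemma disp_cast : ∀ {u v : Fin (m+6)} (p : (cycleGraph (m+6)).Walk u v),
    ((disp p : ℤ) : Fin (m+6)) = v - u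
  | _, _, .nil => by simp
  | u, v, .cons (v := b) h p => by
      rw [disp_cons]
      by_cases hb : b = u + 1
      · rw [if_pos hb, Int.cast_add, disp_cast p, hb]; push_cast; ring
      · rw [if_neg hb]
        have hu : u = b + 1 := (adj_cases h).resolve_left hb
        rw [Int.cast_add, disp_cast p, hu]; push_cast; ring

private lemma disp_abs : ∀ {u v : Fin (m+6)} (p : (cycleGraph (m+6)).Walk u v),
    (disp p).natAbs ≤ p.length
  | _, _, .nil => by simp
  | u, v, .cons (v := b) h p => by
      rw [disp_cons]
      have := disp_abs p
      have h2 := Int.natAbs_add_le (if b = u + 1 then (1:ℤ) else -1) (disp p)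
      simp only [Walk.length_cons]
      split at h2 <;> simp at h2 <;> omega

private def fwdWalk (w : Fin (m+6)) : (L : ℕ) → (cycleGraph (m+6)).Walk w (w + L)
  | 0 => Walk.nil.copy rfl (by simp)
  | L+1 => ((fwdWalk (w+1) L).cons (adj_succ w)).copy rfl (by push_cast; all_goals ring1)

@[simp] private lemma fwdWalk_length (w : Fin (m+6)) (L : ℕ) : (fwdWalk w L).length = L := by
  induction L generalizing w with
  | zero => simp [fwdWalk]
  | succ L ih => simp [fwdWalk, ih]

private lemma fwdWalk_edges (w : Fin (m+6)) (L : ℕ) :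
    ∀ i < L, s(w + (i:ℕ), w + (i:ℕ) + 1) ∈ (fwdWalk w L).edges := by
  induction L generalizing w with
  | zero => omega
  | succ L ih =>
    intro i hi
    rw [fwdWalk, Walk.edges_copy, Walk.edges_cons]
    rcases Nat.eq_zero_or_pos i with h0 | h0
    · subst h0
      have : s(w + ((0:ℕ):Fin (m+6)), w + ((0:ℕ):Fin (m+6)) + 1) = s(w, w+1) := by
        push_cast; ring_nf
      rw [this]; exact List.mem_cons_self
    · right
      obtain ⟨j, rfl⟩ : ∃ j, i = j + 1 := ⟨i - 1, by omega⟩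
      have h2 := ih (w+1) j (by omega)
      have : s(w + ((j+1:ℕ):Fin (m+6)), w + ((j+1:ℕ):Fin (m+6)) + 1)
          = s(w + 1 + ((j:ℕ):Fin (m+6)), w + 1 + ((j:ℕ):Fin (m+6)) + 1) := by
        push_cast; ring_nf
      rw [this]; exact h2

private lemma edges_of_disp_eq : ∀ {u v : Fin (m+6)} (p : (cycleGraph (m+6)).Walk u v),
    disp p = p.length →
    ∀ e ∈ p.edges, ∃ i < p.length, e = s(u + (i:ℕ), u + (i:ℕ) + 1)
  | _, _, .nil => by simp
  | u, v, .cons (v := b) h p => by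
    intro hd e he
    have habs := disp_abs p
    rw [disp_cons] at hd
    simp only [Walk.length_cons] at hd ⊢
    have hb : b = u + 1 ∧ disp p = p.length := by
      split at hd
      · exact ⟨by assumption, by push_cast at hd ⊢; omega⟩
      · exfalso; omega
    rw [Walk.edges_cons] at he
    rcases List.mem_cons.mp he with he | he
    · refine ⟨0, by omega, ?_⟩
      rw [he, hb.1]; push_cast; ring_nf
    · obtain ⟨i, hi, hei⟩ := edges_of_disp_eq p hb.2 e he
      refine ⟨i + 1, by omega, ?_⟩
      rw [hei, hb.1]; push_cast; ring_nf

private lemma disp_append : ∀ {u v w : Fin (m+6)} (p : (cycleGraph (m+6)).Walk u v)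
    (q : (cycleGraph (m+6)).Walk v w), disp (p.append q) = disp p + disp q
  | _, _, _, .nil, q => by simp [Walk.nil_append]
  | u, v, w, .cons (v := b) h p, q => by
    rw [Walk.cons_append, disp_cons, disp_cons, disp_append p q]; ring

private lemma disp_reverse : ∀ {u v : Fin (m+6)} (p : (cycleGraph (m+6)).Walk u v),
    disp p.reverse = - disp p
  | _, _, .nil => by simp
  | u, v, .cons (v := b) h p => by
    rw [Walk.reverse_cons, disp_append, disp_reverse p, disp_cons h p,
      disp_cons h.symm .nil, disp_nil]
    by_cases hb : b = u + 1
    · rw [if_pos hb, if_neg ?_]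
      · ring
      · intro hu; exact succ_succ_ne u (by rw [← hb, ← hu])
    · have hu : u = b + 1 := (adj_cases h).resolve_left hb
      rw [if_neg hb, if_pos hu]; ring

private lemma index_inj {a b : Fin (m+6)} (h : s(a, a+1) = s(b, b+1)) : a = b := by
  rw [Sym2.eq_iff] at h
  rcases h with ⟨h1, _⟩ | ⟨h1, h2⟩
  · exact h1
  · exfalso; apply succ_succ_ne b; rw [← h1]; exact h2

private lemma edge_char {e : Sym2 (Fin (m+6))} (he : e ∈ (cycleGraph (m+6)).edgeSet) :
    ∃ a : Fin (m+6), e = s(a, a+1) := by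
  induction e with
  | h u v =>
    rw [mem_edgeSet] at he
    rcases adj_cases he with h1 | h1
    · exact ⟨u, by rw [h1]⟩
    · exact ⟨v, by rw [h1]; exact Sym2.eq_swap⟩

private lemma dist_le_fwd (w : Fin (m+6)) (k : ℕ) :
    (cycleGraph (m+6)).dist w (w + (k:ℕ)) ≤ k := by
  have := SimpleGraph.dist_le (fwdWalk w k)
  rwa [fwdWalk_length] at this

private lemma geodesic_struct {u v : Fin (m+6)} (p : (cycleGraph (m+6)).Walk u v)
    (hp : p.length = (cycleGraph (m+6)).dist u v) :
    2 * p.length ≤ m + 6 ∧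
    ∃ w : Fin (m+6), ∀ e ∈ p.edges, ∃ i < p.length, e = s(w + (i:ℕ), w + (i:ℕ) + 1) := by
  have hcast := disp_cast p
  have habs := disp_abs p
  set d := disp p with hd
  set k := d.natAbs with hk
  have hdist_k : (cycleGraph (m+6)).dist u v ≤ k := by
    rcases le_or_gt 0 d with hsgn | hsgn
    · have hdk : ((k:ℤ)) = d := Int.natAbs_of_nonneg hsgn
      have heq : u + ((k:ℕ) : Fin (m+6)) = v := by
        have h2 : (((k:ℕ):ℤ) : Fin (m+6)) = v - u := by rw [hdk]; exact hcast
        push_cast at h2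
        rw [h2]; ring
      calc (cycleGraph (m+6)).dist u v = (cycleGraph (m+6)).dist u (u + (k:ℕ)) := by rw [heq]
        _ ≤ k := dist_le_fwd u k
    · have hdk : ((k:ℤ)) = -d := by
        rw [hk]; omega
      have heq : v + ((k:ℕ) : Fin (m+6)) = u := by
        have h2 : (((k:ℕ):ℤ) : Fin (m+6)) = -(v - u) := by rw [hdk]; push_cast; rw [hcast]
        push_cast at h2
        rw [h2]; ring
      calc (cycleGraph (m+6)).dist u v = (cycleGraph (m+6)).dist v u := SimpleGraph.dist_comm ..
        _ = (cycleGraph (m+6)).dist v (v + (k:ℕ)) := by rw [heq]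
        _ ≤ k := dist_le_fwd v k
  have hkl : k = p.length := le_antisymm habs (by rw [hp]; exact hdist_k)
  constructor
  · -- 2 * length ≤ m + 6
    set x := (v - u).val with hx
    have hxn : x < m + 6 := (v - u).isLt
    have h1 : (cycleGraph (m+6)).dist u v ≤ x := by
      have heq : u + ((x:ℕ) : Fin (m+6)) = v := by
        rw [hx, Fin.cast_val_eq_self]; ring
      calc (cycleGraph (m+6)).dist u v = (cycleGraph (m+6)).dist u (u + (x:ℕ)) := by rw [heq]
        _ ≤ x := dist_le_fwd u x
    have h2 : (cycleGraph (m+6)).dist u v ≤ (m + 6) - x := by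
      have heq : v + (((m+6-x):ℕ) : Fin (m+6)) = u := by
        have hc : (((m+6-x):ℕ) : Fin (m+6)) = ((m+6:ℕ):Fin (m+6)) - ((x:ℕ) : Fin (m+6)) :=
          Nat.cast_sub (by omega)
        rw [hc, Fin.natCast_self, hx, Fin.cast_val_eq_self]
        ring
      calc (cycleGraph (m+6)).dist u v = (cycleGraph (m+6)).dist v u := SimpleGraph.dist_comm ..
        _ = (cycleGraph (m+6)).dist v (v + ((m+6-x):ℕ)) := by rw [heq]
        _ ≤ m+6-x := dist_le_fwd v _
    omega
  · rcases le_or_gt 0 d with hsgn | hsgn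
    · refine ⟨u, ?_⟩
      apply edges_of_disp_eq
      rw [← hd, ← hkl, hk]
      omega
    · refine ⟨v, fun e he => ?_⟩
      have hrev : disp p.reverse = (p.reverse.length : ℤ) := by
        rw [disp_reverse, Walk.length_reverse, ← hd, ← hkl, hk]; omega
      have := edges_of_disp_eq p.reverse hrev e (by rw [Walk.edges_reverse, List.mem_reverse]; exact he)
      rwa [Walk.length_reverse] at this

private lemma fwd_geodesic (w : Fin (m+6)) (L : ℕ) (hL : 2 * L ≤ m + 6) :
    IsGeodesic (cycleGraph (m+6)) (fwdWalk w L) := by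
  unfold IsGeodesic
  rw [fwdWalk_length]
  refine le_antisymm ?_ (dist_le_fwd w L)
  have hconn : (cycleGraph (m+6)).Connected := cycleGraph_connected
  obtain ⟨q, hq⟩ := (hconn.preconnected w (w + (L:ℕ))).exists_walk_length_eq_dist
  have hcast := disp_cast q
  have habs := disp_abs q
  set d := disp q with hd
  have hzero : ((d - (L:ℤ) : ℤ) : Fin (m+6)) = 0 := by
    push_cast
    rw [hcast]
    push_cast
    ring
  have hdvd : ((m+6 : ℕ) : ℤ) ∣ (d - (L:ℤ)) := by
    have := (CharP.intCast_eq_zero_iff (Fin (m+6)) (m+6) (d - (L:ℤ))).mp hzero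
    exact_mod_cast this
  obtain ⟨t, ht⟩ := hdvd
  have hLd : (L : ℤ) ≤ d.natAbs := by
    rcases le_or_gt 0 t with hts | hts
    · have h1 : 0 ≤ ((m+6:ℕ):ℤ) * t := mul_nonneg (by positivity) hts
      have h2 : (L:ℤ) ≤ d := by omega
      calc (L:ℤ) ≤ d := h2
        _ ≤ d.natAbs := Int.le_natAbs
    · have h1 : ((m+6:ℕ):ℤ) * t ≤ ((m+6:ℕ):ℤ) * (-1) :=
        mul_le_mul_of_nonneg_left (by omega) (by positivity)
      have h2 : (L:ℤ) ≤ -d := by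
        have : (2*L : ℤ) ≤ (m+6:ℕ) := by exact_mod_cast hL
        omega
      calc (L:ℤ) ≤ -d := h2
        _ ≤ |d| := neg_le_abs d
        _ = d.natAbs := Int.abs_eq_natAbs d
  have : L ≤ d.natAbs := by exact_mod_cast hLd
  omega

private lemma natCast_ne {i j : ℕ} (hi : i < m+6) (hj : j < m+6) (hij : i ≠ j) :
    ((i:ℕ) : Fin (m+6)) ≠ ((j:ℕ) : Fin (m+6)) := by
  intro h
  have h2 := congrArg Fin.val h
  rw [Fin.val_natCast, Fin.val_natCast, Nat.mod_eq_of_lt hi, Nat.mod_eq_of_lt hj] at h2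
  exact hij h2

private lemma sub_val_cases (x y : Fin (m+6)) :
    (y.val ≤ x.val ∧ (x - y).val = x.val - y.val) ∨
    (x.val < y.val ∧ (x - y).val = x.val + (m+6) - y.val) := by
  have h := Fin.coe_int_sub_eq_ite x y
  have hx := x.isLt
  have hy := y.isLt
  rcases le_or_gt y x with hle | hlt
  · left
    rw [if_pos hle] at h
    exact ⟨Fin.le_def.mp hle, by omega⟩
  · right
    rw [if_neg (not_le.mpr hlt)] at h
    exact ⟨Fin.lt_def.mp hlt, by omega⟩

private lemma pair_lemma {w a b : Fin (m+6)} {L : ℕ}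
    (hb : b = a + ((((m+6)/2) : ℕ) : Fin (m+6)))
    (ha : (a - w).val < L) (hbv : (b - w).val < L) (hL : 2 * L ≤ m+6) : False := by
  have h1 : b - w = (a - w) + ((((m+6)/2):ℕ) : Fin (m+6)) := by rw [hb]; ring
  have h2 : (b - w).val = ((a-w).val + ((m+6)/2) % (m+6)) % (m+6) := by
    rw [h1, Fin.val_add, Fin.val_natCast]
  have h3 : ((m+6)/2) % (m+6) = (m+6)/2 := Nat.mod_eq_of_lt (by omega)
  rw [h3] at h2
  have h4 : ((a-w).val + (m+6)/2) % (m+6) = (a-w).val + (m+6)/2 :=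
    Nat.mod_eq_of_lt (by omega)
  omega

private lemma arc_pos {w c : Fin (m+6)} {L i : ℕ} (hiL : i < L)
    (hc : c = w + ((i:ℕ) : Fin (m+6))) : (c - w).val < L := by
  have h1 : c - w = ((i:ℕ) : Fin (m+6)) := by rw [hc]; ring
  rw [h1, Fin.val_natCast]
  have := Nat.mod_le i (m+6)
  omega

private lemma three_case {w c1 c2 c3 : Fin (m+6)} {L : ℕ} (h2L : 2*L ≤ m+6)
    (m1 : c1 = ((0:ℕ):Fin (m+6)) ∨ c1 = ((1:ℕ):Fin (m+6)) ∨
      c1 = ((((m+6)/2):ℕ):Fin (m+6)) ∨ c1 = ((((m+6)/2+1):ℕ):Fin (m+6)))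
    (m2 : c2 = ((0:ℕ):Fin (m+6)) ∨ c2 = ((1:ℕ):Fin (m+6)) ∨
      c2 = ((((m+6)/2):ℕ):Fin (m+6)) ∨ c2 = ((((m+6)/2+1):ℕ):Fin (m+6)))
    (m3 : c3 = ((0:ℕ):Fin (m+6)) ∨ c3 = ((1:ℕ):Fin (m+6)) ∨
      c3 = ((((m+6)/2):ℕ):Fin (m+6)) ∨ c3 = ((((m+6)/2+1):ℕ):Fin (m+6)))
    (f1 : (c1 - w).val < L) (f2 : (c2 - w).val < L) (f3 : (c3 - w).val < L)
    (n12 : c1 ≠ c2) (n13 : c1 ≠ c3) (n23 : c2 ≠ c3) : False := by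
  rcases m1 with rfl | rfl | rfl | rfl <;> rcases m2 with rfl | rfl | rfl | rfl <;>
    rcases m3 with rfl | rfl | rfl | rfl <;>
    first
      | exact n12 rfl
      | exact n13 rfl
      | exact n23 rfl
      | (refine pair_lemma ?_ f1 f2 h2L; push_cast; all_goals ring1)
      | (refine pair_lemma ?_ f2 f1 h2L; push_cast; all_goals ring1)
      | (refine pair_lemma ?_ f1 f3 h2L; push_cast; all_goals ring1)
      | (refine pair_lemma ?_ f3 f1 h2L; push_cast; all_goals ring1)
      | (refine pair_lemma ?_ f2 f3 h2L; push_cast; all_goals ring1)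
      | (refine pair_lemma ?_ f3 f2 h2L; push_cast; all_goals ring1)

private noncomputable def idx (e : Sym2 (Fin (m+6))) : Fin (m+6) :=
  if h : ∃ a : Fin (m+6), e = s(a, a+1) then h.choose else 0

private lemma idx_spec {e : Sym2 (Fin (m+6))} (he : e ∈ (cycleGraph (m+6)).edgeSet) :
    e = s(idx e, idx e + 1) := by
  rw [idx, dif_pos (edge_char he)]
  exact (edge_char he).choose_spec

private lemma final_blow {S : Set (Sym2 (Fin (m+6)))}
    (hgp : ∀ ⦃u v : Fin (m+6)⦄ (p : (cycleGraph (m+6)).Walk u v),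
      IsGeodesic (cycleGraph (m+6)) p →
      ∀ e₁ ∈ S, ∀ e₂ ∈ S, ∀ e₃ ∈ S, e₁ ∈ p.edges → e₂ ∈ p.edges → e₃ ∈ p.edges →
        e₁ = e₂ ∨ e₁ = e₃ ∨ e₂ = e₃)
    {x y z : Fin (m+6)} (w : Fin (m+6))
    (hx : s(x,x+1) ∈ S) (hy : s(y,y+1) ∈ S) (hz : s(z,z+1) ∈ S)
    (nxy : x ≠ y) (nxz : x ≠ z) (nyz : y ≠ z)
    (hxw : (x - w).val < (m+6)/2) (hyw : (y - w).val < (m+6)/2)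
    (hzw : (z - w).val < (m+6)/2) : False := by
  have hgeo := fwd_geodesic w ((m+6)/2) (by omega)
  have hmem : ∀ c : Fin (m+6), (c - w).val < (m+6)/2 →
      s(c, c+1) ∈ (fwdWalk w ((m+6)/2)).edges := by
    intro c hc
    have h2 := fwdWalk_edges w ((m+6)/2) ((c-w).val) hc
    have h3 : w + (((c-w).val : ℕ) : Fin (m+6)) = c := by rw [Fin.cast_val_eq_self]; ring
    rwa [h3] at h2
  rcases hgp (fwdWalk w _) hgeo _ hx _ hy _ hz (hmem x hxw) (hmem y hyw) (hmem z hzw) with h|h|h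
  exacts [nxy (index_inj h), nxz (index_inj h), nyz (index_inj h)]


set_option maxHeartbeats 1000000 in
/-- If `n ≥ 6`, then the edge general position number of the cycle `C_n` equals `4`. -/
theorem egp_cycleGraph_large (n : ℕ) (hn : 6 ≤ n) :
    IsGreatest
      {k : ℕ | ∃ S : Set (Sym2 (Fin n)), IsEdgeGPSet (cycleGraph n) S ∧ S.ncard = k}
      4 := by
  obtain ⟨m, rfl⟩ : ∃ m, n = m + 6 := ⟨n - 6, by omega⟩
  constructor
  · -- membership : a 4-element edge general position set
    set c0 : Fin (m+6) := ((0:ℕ) : Fin (m+6)) with hc0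
    set c1 : Fin (m+6) := ((1:ℕ) : Fin (m+6)) with hc1
    set c2 : Fin (m+6) := ((((m+6)/2 : ℕ)) : Fin (m+6)) with hc2
    set c3 : Fin (m+6) := ((((m+6)/2+1 : ℕ)) : Fin (m+6)) with hc3
    have d01 : c0 ≠ c1 := natCast_ne (by omega) (by omega) (by omega)
    have d02 : c0 ≠ c2 := natCast_ne (by omega) (by omega) (by omega)
    have d03 : c0 ≠ c3 := natCast_ne (by omega) (by omega) (by omega)
    have d12 : c1 ≠ c2 := natCast_ne (by omega) (by omega) (by omega)
    have d13 : c1 ≠ c3 := natCast_ne (by omega) (by omega) (by omega)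
    have d23 : c2 ≠ c3 := natCast_ne (by omega) (by omega) (by omega)
    have e01 : s(c0,c0+1) ≠ s(c1,c1+1) := fun h => d01 (index_inj h)
    have e02 : s(c0,c0+1) ≠ s(c2,c2+1) := fun h => d02 (index_inj h)
    have e03 : s(c0,c0+1) ≠ s(c3,c3+1) := fun h => d03 (index_inj h)
    have e12 : s(c1,c1+1) ≠ s(c2,c2+1) := fun h => d12 (index_inj h)
    have e13 : s(c1,c1+1) ≠ s(c3,c3+1) := fun h => d13 (index_inj h)
    have e23 : s(c2,c2+1) ≠ s(c3,c3+1) := fun h => d23 (index_inj h)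
    refine ⟨({s(c0,c0+1), s(c1,c1+1), s(c2,c2+1), s(c3,c3+1)} :
        Set (Sym2 (Fin (m+6)))), ⟨?_, ?_⟩, ?_⟩
    · intro e he
      simp only [Set.mem_insert_iff, Set.mem_singleton_iff] at he
      rcases he with rfl | rfl | rfl | rfl <;>
        · simp only [mem_edgeSet]; exact adj_succ _
    · intro u v p hp f1 hf1 f2 hf2 f3 hf3 hm1 hm2 hm3
      by_contra hcon
      push_neg at hcon
      obtain ⟨hne12, hne13, hne23⟩ := hcon
      obtain ⟨h2L, w, harc⟩ := geodesic_struct p hp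
      have key : ∀ f ∈ ({s(c0,c0+1), s(c1,c1+1), s(c2,c2+1), s(c3,c3+1)} :
          Set (Sym2 (Fin (m+6)))), f ∈ p.edges →
          ∃ c : Fin (m+6), (c = c0 ∨ c = c1 ∨ c = c2 ∨ c = c3) ∧ f = s(c, c+1) ∧
            (c - w).val < p.length := by
        intro f hf hmf
        simp only [Set.mem_insert_iff, Set.mem_singleton_iff] at hf
        rcases hf with rfl | rfl | rfl | rfl
        · obtain ⟨i, hi, hei⟩ := harc _ hmf
          exact ⟨c0, Or.inl rfl, rfl, arc_pos hi (index_inj hei)⟩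
        · obtain ⟨i, hi, hei⟩ := harc _ hmf
          exact ⟨c1, Or.inr (Or.inl rfl), rfl, arc_pos hi (index_inj hei)⟩
        · obtain ⟨i, hi, hei⟩ := harc _ hmf
          exact ⟨c2, Or.inr (Or.inr (Or.inl rfl)), rfl, arc_pos hi (index_inj hei)⟩
        · obtain ⟨i, hi, hei⟩ := harc _ hmf
          exact ⟨c3, Or.inr (Or.inr (Or.inr rfl)), rfl, arc_pos hi (index_inj hei)⟩
      obtain ⟨g1, hg1, hfg1, hv1⟩ := key f1 hf1 hm1
      obtain ⟨g2, hg2, hfg2, hv2⟩ := key f2 hf2 hm2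
      obtain ⟨g3, hg3, hfg3, hv3⟩ := key f3 hf3 hm3
      have ng12 : g1 ≠ g2 := fun h => hne12 (by rw [hfg1, hfg2, h])
      have ng13 : g1 ≠ g3 := fun h => hne13 (by rw [hfg1, hfg3, h])
      have ng23 : g2 ≠ g3 := fun h => hne23 (by rw [hfg2, hfg3, h])
      rw [hc0] at hg1 hg2 hg3
      rw [hc1] at hg1 hg2 hg3
      rw [hc2] at hg1 hg2 hg3
      rw [hc3] at hg1 hg2 hg3
      exact three_case h2L hg1 hg2 hg3 hv1 hv2 hv3 ng12 ng13 ng23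
    · rw [Set.ncard_insert_of_notMem (by
          simp only [Set.mem_insert_iff, Set.mem_singleton_iff]
          push_neg
          exact ⟨e01, e02, e03⟩),
        Set.ncard_insert_of_notMem (by
          simp only [Set.mem_insert_iff, Set.mem_singleton_iff]
          push_neg
          exact ⟨e12, e13⟩),
        Set.ncard_pair e23]
  · -- upper bound
    rintro k ⟨S, ⟨hSsub, hSgp⟩, rfl⟩
    by_contra hk
    push_neg at hk
    have hfin : S.Finite := Set.toFinite S
    have hcard : 5 ≤ hfin.toFinset.card := by
      rw [← Set.ncard_eq_toFinset_card S hfin]; omega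
    obtain ⟨T, hTsub, hT5⟩ := Finset.exists_subset_card_eq hcard
    have hTS : ∀ e ∈ T, e ∈ S := fun e he => (Set.Finite.mem_toFinset hfin).mp (hTsub he)
    have hidx : ∀ e ∈ T, e = s(idx e, idx e + 1) := fun e he => idx_spec (hSsub (hTS e he))
    have hFcard : (T.image (fun e => (idx e).val)).card = 5 := by
      rw [Finset.card_image_of_injOn, hT5]
      intro e he e' he' hee
      have h2 : idx e = idx e' := Fin.val_injective hee
      rw [hidx e he, hidx e' he', h2]
    obtain ⟨b1,b2,b3,b4,b5,hl⟩ : ∃ b1 b2 b3 b4 b5,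
        (T.image (fun e => (idx e).val)).sort (· ≤ ·) = [b1,b2,b3,b4,b5] := by
      have hlL : ((T.image (fun e => (idx e).val)).sort (· ≤ ·)).length = 5 := by
        rw [Finset.length_sort, hFcard]
      rcases hE : (T.image (fun e => (idx e).val)).sort (· ≤ ·) with
        _|⟨x1,_|⟨x2,_|⟨x3,_|⟨x4,_|⟨x5,_|⟨x6,l⟩⟩⟩⟩⟩⟩ <;>
        first
          | exact ⟨_,_,_,_,_, rfl⟩
          | exact ⟨_,_,_,_,_, hE⟩
          | (exfalso; try rw [hE] at hlL; simp at hlL)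
    have hs := (Finset.sortedLT_sort (T.image (fun e => (idx e).val))).pairwise
    rw [hl] at hs
    simp only [List.pairwise_cons, List.mem_cons, List.not_mem_nil, List.mem_singleton,
      forall_eq_or_imp, forall_eq, or_false, List.Pairwise.nil, and_true] at hs
    obtain ⟨⟨h12, h13, h14, h15⟩, ⟨h23, h24, h25⟩, ⟨h34, h35⟩, h45⟩ := hs
    have hmem : ∀ b ∈ ([b1,b2,b3,b4,b5] : List ℕ),
        ∃ a : Fin (m+6), a.val = b ∧ s(a, a+1) ∈ S := by
      intro b hb
      rw [← hl, Finset.mem_sort] at hb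
      obtain ⟨e, heT, hev⟩ := Finset.mem_image.mp hb
      exact ⟨idx e, hev, by rw [← hidx e heT]; exact hTS e heT⟩
    obtain ⟨a1, hv1, hS1⟩ := hmem b1 (by simp)
    obtain ⟨a2, hv2, hS2⟩ := hmem b2 (by simp)
    obtain ⟨a3, hv3, hS3⟩ := hmem b3 (by simp)
    obtain ⟨a4, hv4, hS4⟩ := hmem b4 (by simp)
    obtain ⟨a5, hv5, hS5⟩ := hmem b5 (by simp)
    have hb5 : a5.val < m+6 := a5.isLt
    have n12 : a1 ≠ a2 := fun h => by have := congrArg Fin.val h; omega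
    have n13 : a1 ≠ a3 := fun h => by have := congrArg Fin.val h; omega
    have n23 : a2 ≠ a3 := fun h => by have := congrArg Fin.val h; omega
    have n34 : a3 ≠ a4 := fun h => by have := congrArg Fin.val h; omega
    have n45 : a4 ≠ a5 := fun h => by have := congrArg Fin.val h; omega
    have n35 : a3 ≠ a5 := fun h => by have := congrArg Fin.val h; omega
    have n14 : a1 ≠ a4 := fun h => by have := congrArg Fin.val h; omega
    have n15 : a1 ≠ a5 := fun h => by have := congrArg Fin.val h; omega
    have n24 : a2 ≠ a4 := fun h => by have := congrArg Fin.val h; omega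
    have n25 : a2 ≠ a5 := fun h => by have := congrArg Fin.val h; omega
    have hwin : a3.val - a1.val ≤ 2*(m+6)/5 ∨ a4.val - a2.val ≤ 2*(m+6)/5 ∨
        a5.val - a3.val ≤ 2*(m+6)/5 ∨ (m+6) + a1.val - a4.val ≤ 2*(m+6)/5 ∨
        (m+6) + a2.val - a5.val ≤ 2*(m+6)/5 := by omega
    clear hl hmem hTS hidx hFcard hTsub hT5 hcard
    rcases hwin with hw | hw | hw | hw | hw
    · exact final_blow hSgp a1 hS1 hS2 hS3 n12 n13 n23
        (by rcases sub_val_cases a1 a1 with ⟨h,e⟩|⟨h,e⟩ <;> omega)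
        (by rcases sub_val_cases a2 a1 with ⟨h,e⟩|⟨h,e⟩ <;> omega)
        (by rcases sub_val_cases a3 a1 with ⟨h,e⟩|⟨h,e⟩ <;> omega)
    · exact final_blow hSgp a2 hS2 hS3 hS4 n23 n24 n34
        (by rcases sub_val_cases a2 a2 with ⟨h,e⟩|⟨h,e⟩ <;> omega)
        (by rcases sub_val_cases a3 a2 with ⟨h,e⟩|⟨h,e⟩ <;> omega)
        (by rcases sub_val_cases a4 a2 with ⟨h,e⟩|⟨h,e⟩ <;> omega)
    · exact final_blow hSgp a3 hS3 hS4 hS5 n34 n35 n45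
        (by rcases sub_val_cases a3 a3 with ⟨h,e⟩|⟨h,e⟩ <;> omega)
        (by rcases sub_val_cases a4 a3 with ⟨h,e⟩|⟨h,e⟩ <;> omega)
        (by rcases sub_val_cases a5 a3 with ⟨h,e⟩|⟨h,e⟩ <;> omega)
    · exact final_blow hSgp a4 hS4 hS5 hS1 n45 (Ne.symm n14) (Ne.symm n15)
        (by rcases sub_val_cases a4 a4 with ⟨h,e⟩|⟨h,e⟩ <;> omega)
        (by rcases sub_val_cases a5 a4 with ⟨h,e⟩|⟨h,e⟩ <;> omega)
        (by rcases sub_val_cases a1 a4 with ⟨h,e⟩|⟨h,e⟩ <;> omega)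
    · exact final_blow hSgp a5 hS5 hS1 hS2 (Ne.symm n15) (Ne.symm n25) n12
        (by rcases sub_val_cases a5 a5 with ⟨h,e⟩|⟨h,e⟩ <;> omega)
        (by rcases sub_val_cases a1 a5 with ⟨h,e⟩|⟨h,e⟩ <;> omega)
        (by rcases sub_val_cases a2 a5 with ⟨h,e⟩|⟨h,e⟩ <;> omega)
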